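/- arXiv:1901.06619 — 3 statements merged into one kernel-verified Lean document; each statement's English description precedes it below -/
import Mathlib

section
/- Let A be a real k × n matrix with A Aᵀ = I_k, and for j ∈ {1,…,n} let α_j² := Σ_{i=1}^k a_{ij}² be the squared Euclidean norm of the j-th column of A. Then for every diagonal positive definite matrix Λ = Diag(λ_1,…,λ_n), log det(A Λ Aᵀ) ≥ Σ_{j=1}^n α_j² log λ_j. -/
open MeasureTheory ProbabilityTheory Module
open scoped ENNReal NNReal

noncomputable section

namespace BLEPI

/-- Differential entropy of a measure on a space equipped with a canonical volume:
`h(μ) = -∫ log (dμ/dvol) dμ`, which equals `-∫ f log f dvol` when `μ` has density `f`. -/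
def dEnt {E : Type*} [MeasureSpace E] (μ : Measure E) : ℝ :=
  -∫ x, Real.log ((μ.rnDeriv volume x).toReal) ∂μ

/-- Condition (*) : `μ` has a density `f` w.r.t. volume with `∫ f log (1 + f) < ∞`. -/
def CondStar {E : Type*} [MeasureSpace E] (μ : Measure E) : Prop :=
  μ ≪ (volume : Measure E) ∧
    Integrable (fun x => ((μ.rnDeriv volume x).toReal) *
      Real.log (1 + (μ.rnDeriv volume x).toReal)) (volume : Measure E)

/-- Convolution of two measures. -/
def mconv {E : Type*} [MeasurableSpace E] [Add E] (μ ν : Measure E) : Measure E :=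
  (μ.prod ν).map (fun p => p.1 + p.2)

/-- The centered Gaussian product measure on `ℝ^d` whose coordinates are
independent centered Gaussians of variance `v`. -/
def gaussPi (v : ℝ≥0) (d : ℕ) : Measure (EuclideanSpace ℝ (Fin d)) :=
  (Measure.pi fun _ : Fin d => gaussianReal 0 v).map
    (MeasurableEquiv.toLp 2 (Fin d → ℝ))

/-- The standard Gaussian measure `N(0, I_n)` on `Fin n → ℝ`. -/
def stdGauss (n : ℕ) : Measure (Fin n → ℝ) := Measure.pi fun _ : Fin n => gaussianReal 0 1

/-- `μ` is the centered Gaussian measure on `ℝ^d` with covariance matrix `S`. -/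
def IsCenteredGaussian {d : ℕ} (μ : Measure (EuclideanSpace ℝ (Fin d)))
    (S : Matrix (Fin d) (Fin d) ℝ) : Prop :=
  ∃ L : Matrix (Fin d) (Fin d) ℝ, L * L.transpose = S ∧
    μ = (gaussPi 1 d).map
      (fun x => (EuclideanSpace.equiv (Fin d) ℝ).symm (L.mulVec (EuclideanSpace.equiv (Fin d) ℝ x)))

/-- The data `(A, c, r, d)` of a BL-EPI datum (validity conditions are stated separately,
so that induced data with possibly zero-dimensional blocks are also representable). -/
structure Datum where
  m : ℕ
  k : ℕ
  r : Fin k → ℕ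
  nt : Fin m → ℕ
  A : ∀ j : Fin m, ((i : Fin k) → EuclideanSpace ℝ (Fin (r i))) →ₗ[ℝ] EuclideanSpace ℝ (Fin (nt j))
  c : Fin m → ℝ
  d : Fin k → ℝ

/-- The ambient space `ℝ^n = ℝ^{r_1} × ⋯ × ℝ^{r_k}`. -/
abbrev Datum.E (D : Datum) : Type := (i : Fin D.k) → EuclideanSpace ℝ (Fin (D.r i))

/-- The two-copy ambient space `ℝ^{2r_1} × ⋯ × ℝ^{2r_k}`. -/
abbrev Datum.E2 (D : Datum) : Type :=
  (i : Fin D.k) → EuclideanSpace ℝ (Fin (D.r i)) × EuclideanSpace ℝ (Fin (D.r i))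

/-- Validity of a BL-EPI datum: `m, k, r_i` positive, the `A_j` surjective, `c, d` nonneg. -/
def Datum.Valid (D : Datum) : Prop :=
  0 < D.m ∧ 0 < D.k ∧ (∀ i, 0 < D.r i) ∧ (∀ j, Function.Surjective (D.A j)) ∧
    (∀ j, 0 ≤ D.c j) ∧ (∀ i, 0 ≤ D.d i)

/-- Membership of a law `ν` on `ℝ^n` in the class `P(r)`: a probability measure whose
blocks are mutually independent, each block having a density satisfying (*), with zero
mean and finite second moments. -/
def MemP (D : Datum) (ν : Measure D.E) : Prop :=
  IsProbabilityMeasure ν ∧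
  ν = Measure.pi (fun i => ν.map (fun x => x i)) ∧
  (∀ i, CondStar (ν.map (fun x => x i))) ∧
  (∀ i (a : Fin (D.r i)), ∫ x, x i a ∂ν = 0) ∧
  (∀ i (a : Fin (D.r i)), Integrable (fun x => (x i a) ^ 2) ν)

/-- Membership in `P_g(r)` : member of `P(r)` with Gaussian blocks. -/
def MemPg (D : Datum) (ν : Measure D.E) : Prop :=
  MemP D ν ∧ ∀ i, ∃ S : Matrix (Fin (D.r i)) (Fin (D.r i)) ℝ,
    IsCenteredGaussian (ν.map (fun x => x i)) S

/-- Membership of a joint law on `ℝ^{2r_1} × ⋯ × ℝ^{2r_k}` in `P(2r)` : the pairs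
`(X_{i1}, X_{i2})` are mutually independent, each with a density satisfying (*),
zero mean and finite second moments. -/
def MemP2 (D : Datum) (ν : Measure D.E2) : Prop :=
  IsProbabilityMeasure ν ∧
  ν = Measure.pi (fun i => ν.map (fun x => x i)) ∧
  (∀ i, CondStar (ν.map (fun x => x i))) ∧
  (∀ i (a : Fin (D.r i)), ∫ x, (x i).1 a ∂ν = 0) ∧
  (∀ i (a : Fin (D.r i)), ∫ x, (x i).2 a ∂ν = 0) ∧
  (∀ i (a : Fin (D.r i)), Integrable (fun x => ((x i).1 a) ^ 2) ν) ∧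
  (∀ i (a : Fin (D.r i)), Integrable (fun x => ((x i).2 a) ^ 2) ν)

/-- The objective `Σ d_i h(X_i) - Σ c_j h(A_j X)` as a function of the law of `X`. -/
def obj (D : Datum) (ν : Measure D.E) : ℝ :=
  ∑ i, D.d i * dEnt (ν.map (fun x => x i)) - ∑ j, D.c j * dEnt (ν.map (D.A j))

/-- `M = sup_{X ∈ P(r)} (Σ d_i h(X_i) - Σ c_j h(A_j X))`, as an extended real. -/
def Mval (D : Datum) : EReal :=
  sSup {y : EReal | ∃ ν : Measure D.E, MemP D ν ∧ y = ((obj D ν : ℝ) : EReal)}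

/-- `M_g`, the same supremum restricted to Gaussian members. -/
def Mgval (D : Datum) : EReal :=
  sSup {y : EReal | ∃ ν : Measure D.E, MemPg D ν ∧ y = ((obj D ν : ℝ) : EReal)}

/-- Condition (i) of the finiteness theorem: for every `r`-product form subspace
`V = V_1 × ⋯ × V_k`, `Σ d_i dim V_i ≤ Σ c_j dim (A_j V)`. -/
def Cond1 (D : Datum) : Prop :=
  ∀ V : ∀ i : Fin D.k, Submodule ℝ (EuclideanSpace ℝ (Fin (D.r i))),
    ∑ i, D.d i * (finrank ℝ (V i) : ℝ) ≤
      ∑ j, D.c j * (finrank ℝ ((Submodule.pi Set.univ V).map (D.A j)) : ℝ)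

/-- Condition (ii) of the finiteness theorem: `Σ d_i r_i = Σ c_j n_j`. -/
def Cond2 (D : Datum) : Prop :=
  ∑ i, D.d i * (D.r i : ℝ) = ∑ j, D.c j * (D.nt j : ℝ)

/-- The law of `√δ W = (√δ W_1, …, √δ W_k)` on the ambient space. -/
def gaussE (D : Datum) (δ : ℝ) : Measure D.E := Measure.pi fun i => gaussPi δ.toNNReal (D.r i)

/-- `s_{ε,δ}` as a function of the law `ν` of `X`:
`Σ d_i h(X_i + √δ W_i) - Σ c_j h(A_j (X + √δ W) + √ε Z_j)`. -/
def sFun (D : Datum) (ε δ : ℝ) (ν : Measure D.E) : ℝ :=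
  ∑ i, D.d i * dEnt (mconv (ν.map (fun x => x i)) (gaussPi δ.toNNReal (D.r i))) -
    ∑ j, D.c j * dEnt (mconv (ν.map (D.A j))
      (mconv ((gaussE D δ).map (D.A j)) (gaussPi ε.toNNReal (D.nt j))))

/-- The law of the noise `(A_j (√δ W_1) + √ε Z_{j1}, A_j (√δ W_2) + √ε Z_{j2})`. -/
def noise2 (D : Datum) (ε δ : ℝ) (j : Fin D.m) :
    Measure (EuclideanSpace ℝ (Fin (D.nt j)) × EuclideanSpace ℝ (Fin (D.nt j))) :=
  (mconv ((gaussE D δ).map (D.A j)) (gaussPi ε.toNNReal (D.nt j))).prod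
    (mconv ((gaussE D δ).map (D.A j)) (gaussPi ε.toNNReal (D.nt j)))

/-- The two-copy version of `s_{ε,δ}` as a function of the joint law `ν` of `(X_1, X_2)`. -/
def sFun2 (D : Datum) (ε δ : ℝ) (ν : Measure D.E2) : ℝ :=
  ∑ i, D.d i * dEnt (mconv (ν.map (fun x => x i))
      ((gaussPi δ.toNNReal (D.r i)).prod (gaussPi δ.toNNReal (D.r i)))) -
    ∑ j, D.c j * dEnt (mconv
      (ν.map (fun x => (D.A j (fun i => (x i).1), D.A j (fun i => (x i).2))))
      (noise2 D ε δ j))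

/-- `s_{ε,δ}(X ∣ U) = Σ_u P(U = u) s_{ε,δ}(X ∣ U = u)` for a finite-valued `U`. -/
def sCond (D : Datum) (ε δ : ℝ) {Ω ι : Type*} [MeasurableSpace Ω] [Fintype ι]
    (P : Measure Ω) (X : Ω → D.E) (U : Ω → ι) : ℝ :=
  ∑ u : ι, (P (U ⁻¹' {u})).toReal * sFun D ε δ ((P[|U ⁻¹' {u}]).map X)

/-- the two-copy version of `s_{ε,δ}(X₁, X₂ ∣ U)`. -/
def sCond2 (D : Datum) (ε δ : ℝ) {Ω ι : Type*} [MeasurableSpace Ω] [Fintype ι]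
    (P : Measure Ω) (X : Ω → D.E2) (U : Ω → ι) : ℝ :=
  ∑ u : ι, (P (U ⁻¹' {u})).toReal * sFun2 D ε δ ((P[|U ⁻¹' {u}]).map X)

/-- `S_{ε,δ}(X)`: the supremum of `s_{ε,δ}(X ∣ U)` over finite-valued auxiliaries `U`
whose conditional laws lie in `P(r)`; expressed distributionally via finite mixtures. -/
def SVal (D : Datum) (ε δ : ℝ) (ν : Measure D.E) : EReal :=
  sSup {y : EReal | ∃ (t : ℕ) (p : Fin t → ℝ≥0) (νs : Fin t → Measure D.E),
    (∑ u, p u) = 1 ∧ (∀ u, MemP D (νs u)) ∧ (∑ u, ((p u : ℝ≥0∞) • νs u)) = ν ∧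
    y = ((∑ u, (p u : ℝ) * sFun D ε δ (νs u) : ℝ) : EReal)}

/-- The two-copy version `S_{ε,δ}(X₁, X₂)`. -/
def SVal2 (D : Datum) (ε δ : ℝ) (ν : Measure D.E2) : EReal :=
  sSup {y : EReal | ∃ (t : ℕ) (p : Fin t → ℝ≥0) (νs : Fin t → Measure D.E2),
    (∑ u, p u) = 1 ∧ (∀ u, MemP2 D (νs u)) ∧ (∑ u, ((p u : ℝ≥0∞) • νs u)) = ν ∧
    y = ((∑ u, (p u : ℝ) * sFun2 D ε δ (νs u) : ℝ) : EReal)}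

/-- The law of `X₁` under a two-copy law. -/
def marg1 (D : Datum) (ν : Measure D.E2) : Measure D.E := ν.map (fun x i => (x i).1)

/-- The law of `X₂` under a two-copy law. -/
def marg2 (D : Datum) (ν : Measure D.E2) : Measure D.E := ν.map (fun x i => (x i).2)

/-- The joint law of `(X₁, X₂)` when `X₁ ∼ μ₁` and `X₂ ∼ μ₂` are independent. -/
def coupleIndep (D : Datum) (μ₁ μ₂ : Measure D.E) : Measure D.E2 :=
  (μ₁.prod μ₂).map (fun p i => (p.1 i, p.2 i))

/-- `E[X Xᵀ] ⪯ Σ` where `Σ = Diag(Σ_1, …, Σ_k)`, expressed via quadratic forms. -/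
def covLE (D : Datum) (ν : Measure D.E)
    (S : ∀ i, Matrix (Fin (D.r i)) (Fin (D.r i)) ℝ) : Prop :=
  ∀ v : D.E, ∫ x, (∑ i, ∑ a, v i a * x i a) ^ 2 ∂ν ≤
    ∑ i, ∑ a, ∑ b, v i a * S i a b * v i b

/-- `V(Σ) = sup { S_{ε,δ}(X) : X ∈ P(r), E[X Xᵀ] ⪯ Σ }`. -/
def VVal (D : Datum) (ε δ : ℝ) (S : ∀ i, Matrix (Fin (D.r i)) (Fin (D.r i)) ℝ) : EReal :=
  sSup {y : EReal | ∃ ν : Measure D.E, MemP D ν ∧ covLE D ν S ∧ y = SVal D ε δ ν}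

/-- The `r`-product form subspace `U_1 × ⋯ × U_k` of the ambient space. -/
def prodSub (D : Datum) (U : ∀ i, Submodule ℝ (EuclideanSpace ℝ (Fin (D.r i)))) :
    Submodule ℝ D.E := Submodule.pi Set.univ U

/-- `A_j U`, the image of the product subspace under `A_j`. -/
def AjU (D : Datum) (U : ∀ i, Submodule ℝ (EuclideanSpace ℝ (Fin (D.r i)))) (j : Fin D.m) :
    Submodule ℝ (EuclideanSpace ℝ (Fin (D.nt j))) := (prodSub D U).map (D.A j)

/-- Embedding of coordinates of `U` into the ambient space via linear isometries `φ_i`. -/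
def embedMap (D : Datum) (U : ∀ i, Submodule ℝ (EuclideanSpace ℝ (Fin (D.r i))))
    (φ : ∀ i, EuclideanSpace ℝ (Fin (finrank ℝ (U i))) ≃ₗᵢ[ℝ] U i) :
    ((i : Fin D.k) → EuclideanSpace ℝ (Fin (finrank ℝ (U i)))) →ₗ[ℝ] D.E :=
  LinearMap.pi (fun i => (U i).subtype ∘ₗ ((φ i).toLinearEquiv : _ ≃ₗ[ℝ] _).toLinearMap ∘ₗ
    LinearMap.proj i)

lemma embedMap_mem (D : Datum) (U : ∀ i, Submodule ℝ (EuclideanSpace ℝ (Fin (D.r i))))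
    (φ : ∀ i, EuclideanSpace ℝ (Fin (finrank ℝ (U i))) ≃ₗᵢ[ℝ] U i)
    (v : (i : Fin D.k) → EuclideanSpace ℝ (Fin (finrank ℝ (U i)))) :
    embedMap D U φ v ∈ prodSub D U :=
  Submodule.mem_pi.mpr (fun i _ => ((φ i) (v i)).2)

/-- The induced BL-EPI datum on `U = U_1 × ⋯ × U_k`, with maps `Ã_j : U → A_j U` given by
restriction of `A_j`, expressed in coordinates via linear isometries `φ_i`, `ψ_j`. -/
def inducedU (D : Datum) (U : ∀ i, Submodule ℝ (EuclideanSpace ℝ (Fin (D.r i))))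
    (φ : ∀ i, EuclideanSpace ℝ (Fin (finrank ℝ (U i))) ≃ₗᵢ[ℝ] U i)
    (ψ : ∀ j, EuclideanSpace ℝ (Fin (finrank ℝ (AjU D U j))) ≃ₗᵢ[ℝ] AjU D U j) : Datum where
  m := D.m
  k := D.k
  r := fun i => finrank ℝ (U i)
  nt := fun j => finrank ℝ (AjU D U j)
  A := fun j => ((ψ j).symm.toLinearEquiv : _ ≃ₗ[ℝ] _).toLinearMap ∘ₗ
    LinearMap.codRestrict (AjU D U j) (D.A j ∘ₗ embedMap D U φ)
      (fun v => Submodule.mem_map_of_mem (embedMap_mem D U φ v))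
  c := D.c
  d := D.d

/-- Embedding of coordinates of `U^⊥ = U_1^⊥ × ⋯ × U_k^⊥` into the ambient space. -/
def embedMapPerp (D : Datum) (U : ∀ i, Submodule ℝ (EuclideanSpace ℝ (Fin (D.r i))))
    (φ : ∀ i, EuclideanSpace ℝ (Fin (finrank ℝ ((U i)ᗮ))) ≃ₗᵢ[ℝ] (U i)ᗮ) :
    ((i : Fin D.k) → EuclideanSpace ℝ (Fin (finrank ℝ ((U i)ᗮ)))) →ₗ[ℝ] D.E :=
  LinearMap.pi (fun i => ((U i)ᗮ).subtype ∘ₗ ((φ i).toLinearEquiv : _ ≃ₗ[ℝ] _).toLinearMap ∘ₗ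
    LinearMap.proj i)

/-- The induced BL-EPI datum on `U^⊥`, with maps `Ã̃_j x = Π_{(A_j U)^⊥} (A_j x)`
expressed in coordinates via linear isometries `φ'_i`, `ψ'_j`. -/
def inducedUperp (D : Datum) (U : ∀ i, Submodule ℝ (EuclideanSpace ℝ (Fin (D.r i))))
    (φ' : ∀ i, EuclideanSpace ℝ (Fin (finrank ℝ ((U i)ᗮ))) ≃ₗᵢ[ℝ] (U i)ᗮ)
    (ψ' : ∀ j, EuclideanSpace ℝ (Fin (finrank ℝ ((AjU D U j)ᗮ))) ≃ₗᵢ[ℝ] (AjU D U j)ᗮ) :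
    Datum where
  m := D.m
  k := D.k
  r := fun i => finrank ℝ ((U i)ᗮ)
  nt := fun j => finrank ℝ ((AjU D U j)ᗮ)
  A := fun j => ((ψ' j).symm.toLinearEquiv : _ ≃ₗ[ℝ] _).toLinearMap ∘ₗ
    ((Submodule.orthogonalProjectionOnto ((AjU D U j)ᗮ)).toLinearMap ∘ₗ (D.A j ∘ₗ embedMapPerp D U φ'))
  c := D.c
  d := D.d

/-- For a `k × n` matrix `A` with orthonormal rows (`A Aᵀ = I`) and a positive diagonal
matrix `Λ = Diag(λ₁, …, λₙ)`, `log det (A Λ Aᵀ) ≥ Σ_j α_j² log λ_j`, where `α_j²` is the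
squared norm of the `j`-th column of `A`. -/
theorem logdet_diagonal_lower_bound (k n : ℕ) (A : Matrix (Fin k) (Fin n) ℝ)
    (hA : A * A.transpose = 1) (lam : Fin n → ℝ) (hlam : ∀ j, 0 < lam j) :
    ∑ j, (∑ i, (A i j) ^ 2) * Real.log (lam j) ≤
      Real.log (A * Matrix.diagonal lam * A.transpose).det := by
  classical
  set M := A * Matrix.diagonal lam * A.transpose with hMdef
  have hM : M.IsHermitian := by
    unfold Matrix.IsHermitian
    rw [Matrix.conjTranspose_eq_transpose_of_trivial]
    simp only [hMdef, Matrix.transpose_mul, Matrix.transpose_transpose,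
      Matrix.diagonal_transpose, Matrix.mul_assoc]
  set V : Matrix (Fin k) (Fin k) ℝ := (hM.eigenvectorUnitary : Matrix (Fin k) (Fin k) ℝ) with hVdef
  have hV1 : V * star V = 1 := Matrix.mem_unitaryGroup_iff.mp hM.eigenvectorUnitary.2
  have hV2 : star V * V = 1 := Matrix.mem_unitaryGroup_iff'.mp hM.eigenvectorUnitary.2
  set B : Matrix (Fin k) (Fin n) ℝ := star V * A with hBdef
  have hstar : star V = V.transpose := by
    rw [Matrix.star_eq_conjTranspose, Matrix.conjTranspose_eq_transpose_of_trivial]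
  have hBt : B.transpose = A.transpose * V := by
    rw [hBdef, Matrix.transpose_mul, hstar, Matrix.transpose_transpose]
  have hBBt : B * B.transpose = 1 := by
    rw [hBdef, hBt, Matrix.mul_assoc, ← Matrix.mul_assoc A, hA, Matrix.one_mul, hV2]
  have hBtB : B.transpose * B = A.transpose * A := by
    rw [hBdef, hBt, Matrix.mul_assoc, ← Matrix.mul_assoc V, hV1, Matrix.one_mul]
  have hdiag : B * Matrix.diagonal lam * B.transpose = Matrix.diagonal hM.eigenvalues := by
    have hspec := hM.spectral_theorem
    have hcoe : Matrix.diagonal (RCLike.ofReal ∘ hM.eigenvalues) =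
        Matrix.diagonal hM.eigenvalues := by
      congr 1
    rw [hcoe] at hspec
    have h0 := congrArg (fun X => star V * X * V) hspec
    simp only [Unitary.conjStarAlgAut_apply, Unitary.coe_star, ← hVdef] at h0
    have hkey : star V * M * V = Matrix.diagonal hM.eigenvalues := by
      rw [h0]
      simp only [Matrix.mul_assoc, hV2, Matrix.mul_one]
      rw [← Matrix.mul_assoc, hV2, Matrix.one_mul]
    rw [← hkey, hMdef, hBdef, hBt]
    simp only [Matrix.mul_assoc]
  have hmu : ∀ i, hM.eigenvalues i = ∑ j, (B i j) ^ 2 * lam j := by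
    intro i
    have h := congrFun (congrFun hdiag i) i
    rw [Matrix.diagonal_apply_eq] at h
    rw [← h, Matrix.mul_apply]
    refine Finset.sum_congr rfl fun j _ => ?_
    rw [Matrix.mul_diagonal, Matrix.transpose_apply]
    ring
  have hw1 : ∀ i, ∑ j, (B i j) ^ 2 = 1 := by
    intro i
    have h := congrFun (congrFun hBBt i) i
    rw [Matrix.one_apply_eq, Matrix.mul_apply] at h
    rw [← h]
    refine Finset.sum_congr rfl fun j _ => ?_
    rw [Matrix.transpose_apply]; ring
  have hwc : ∀ j, ∑ i, (B i j) ^ 2 = ∑ i, (A i j) ^ 2 := by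
    intro j
    have h := congrFun (congrFun hBtB j) j
    rw [Matrix.mul_apply, Matrix.mul_apply] at h
    calc ∑ i, (B i j) ^ 2 = ∑ i, B.transpose j i * B i j := by
          refine Finset.sum_congr rfl fun i _ => ?_
          rw [Matrix.transpose_apply]; ring
      _ = ∑ i, A.transpose j i * A i j := h
      _ = ∑ i, (A i j) ^ 2 := by
          refine Finset.sum_congr rfl fun i _ => ?_
          rw [Matrix.transpose_apply]; ring
  have hpos : ∀ i, 0 < hM.eigenvalues i := by
    intro i
    rw [hmu i]
    have hne : ∑ j, (B i j) ^ 2 ≠ 0 := by rw [hw1 i]; norm_num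
    obtain ⟨j, _, hj⟩ := Finset.exists_ne_zero_of_sum_ne_zero hne
    exact Finset.sum_pos' (fun j _ => mul_nonneg (sq_nonneg _) (hlam j).le)
      ⟨j, Finset.mem_univ j,
        mul_pos (lt_of_le_of_ne (sq_nonneg _) (Ne.symm hj)) (hlam j)⟩
  have hdet : M.det = ∏ i, hM.eigenvalues i := by
    simpa using hM.det_eq_prod_eigenvalues
  have hlog : Real.log M.det = ∑ i, Real.log (hM.eigenvalues i) := by
    rw [hdet, Real.log_prod (fun i _ => (hpos i).ne')]
  have hjen : ∀ i, ∑ j, (B i j) ^ 2 * Real.log (lam j) ≤ Real.log (hM.eigenvalues i) := by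
    intro i
    rw [hmu i]
    have := (strictConcaveOn_log_Ioi.concaveOn).le_map_sum (t := Finset.univ)
      (w := fun j => (B i j) ^ 2) (p := lam) (fun j _ => sq_nonneg _) (hw1 i)
      (fun j _ => hlam j)
    simpa [smul_eq_mul] using this
  calc ∑ j, (∑ i, (A i j) ^ 2) * Real.log (lam j)
      = ∑ j, (∑ i, (B i j) ^ 2) * Real.log (lam j) := by
        refine Finset.sum_congr rfl fun j _ => ?_
        rw [hwc j]
    _ = ∑ i, ∑ j, (B i j) ^ 2 * Real.log (lam j) := by
        rw [Finset.sum_comm]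
        exact Finset.sum_congr rfl fun j _ => Finset.sum_mul ..
    _ ≤ ∑ i, Real.log (hM.eigenvalues i) := Finset.sum_le_sum fun i _ => hjen i
    _ = Real.log M.det := hlog.symm

end BLEPI
end
end

section
/- (Rotation invariance) Let (A, c, r, d) be a BL-EPI datum, fix ε, δ > 0, and let (X_1, X_2, U) be random variables with (X_1, X_2) ∈ P(2r) and U finite-valued. Define X_+ := (X_1 + X_2)/√2 and X_− := (X_1 − X_2)/√2. Then s_{ε,δ}(X_1, X_2 | U) = s_{ε,δ}(X_+, X_− | U). -/
open MeasureTheory ProbabilityTheory Module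
open scoped ENNReal NNReal

noncomputable section

namespace BLEPI

/-! ### Auxiliary machinery for rotation invariance -/

section RotationAux

variable {E : Type*} [AddCommGroup E] [Module ℝ E]

/-- The rotation `(a, b) ↦ ((a+b)/√2, (a−b)/√2)`. -/
def rot (p : E × E) : E × E :=
  ((Real.sqrt 2)⁻¹ • (p.1 + p.2), (Real.sqrt 2)⁻¹ • (p.1 - p.2))

lemma sqrt2_inv_mul_self : (Real.sqrt 2)⁻¹ * (Real.sqrt 2)⁻¹ = (2 : ℝ)⁻¹ := by
  rw [← mul_inv, Real.mul_self_sqrt (by norm_num : (0:ℝ) ≤ 2)]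

lemma rot_invol (p : E × E) : rot (rot p) = p := by
  unfold rot
  ext
  · show (Real.sqrt 2)⁻¹ • ((Real.sqrt 2)⁻¹ • (p.1 + p.2) + (Real.sqrt 2)⁻¹ • (p.1 - p.2)) = p.1
    rw [← smul_add, smul_smul, sqrt2_inv_mul_self]
    have h : p.1 + p.2 + (p.1 - p.2) = (2 : ℝ) • p.1 := by
      rw [two_smul]; abel
    rw [h, smul_smul]; norm_num
  · show (Real.sqrt 2)⁻¹ • ((Real.sqrt 2)⁻¹ • (p.1 + p.2) - (Real.sqrt 2)⁻¹ • (p.1 - p.2)) = p.2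
    rw [← smul_sub, smul_smul, sqrt2_inv_mul_self]
    have h : p.1 + p.2 - (p.1 - p.2) = (2 : ℝ) • p.2 := by
      rw [two_smul]; abel
    rw [h, smul_smul]; norm_num

lemma rot_add (p q : E × E) : rot (p + q) = rot p + rot q := by
  unfold rot
  ext
  · show (Real.sqrt 2)⁻¹ • ((p.1 + q.1) + (p.2 + q.2)) =
      (Real.sqrt 2)⁻¹ • (p.1 + p.2) + (Real.sqrt 2)⁻¹ • (q.1 + q.2)
    rw [← smul_add]; congr 1; abel
  · show (Real.sqrt 2)⁻¹ • ((p.1 + q.1) - (p.2 + q.2)) =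
      (Real.sqrt 2)⁻¹ • (p.1 - p.2) + (Real.sqrt 2)⁻¹ • (q.1 - q.2)
    rw [← smul_add]; congr 1; abel

lemma rot_smul (c : ℝ) (p : E × E) : rot (c • p) = c • rot p := by
  unfold rot
  ext
  · show (Real.sqrt 2)⁻¹ • (c • p.1 + c • p.2) = c • ((Real.sqrt 2)⁻¹ • (p.1 + p.2))
    rw [← smul_add, smul_comm]
  · show (Real.sqrt 2)⁻¹ • (c • p.1 - c • p.2) = c • ((Real.sqrt 2)⁻¹ • (p.1 - p.2))
    rw [← smul_sub, smul_comm]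

variable (E) in
/-- `rot` as a linear map. -/
def rotL : (E × E) →ₗ[ℝ] E × E where
  toFun := rot
  map_add' := rot_add
  map_smul' := rot_smul

@[simp] lemma rotL_coe : ⇑(rotL E) = (rot : E × E → E × E) := rfl

lemma measurable_rot' {F : Type*} [MeasurableSpace F] [AddCommGroup F] [Module ℝ F]
    [MeasurableAdd₂ F] [MeasurableSub₂ F] [MeasurableSMul ℝ F] :
    Measurable (rot : F × F → F × F) := by
  show Measurable fun p : F × F =>
    ((Real.sqrt 2)⁻¹ • (p.1 + p.2), (Real.sqrt 2)⁻¹ • (p.1 - p.2))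
  exact ((measurable_const_smul _).comp (measurable_fst.add measurable_snd)).prodMk
    ((measurable_const_smul _).comp (measurable_fst.sub measurable_snd))

section RotTop

variable (F : Type*) [NormedAddCommGroup F] [NormedSpace ℝ F] [MeasureSpace F]
  [BorelSpace F] [SecondCountableTopology F]

lemma measurable_rot : Measurable (rot : F × F → F × F) :=
  (((continuous_fst.add continuous_snd).const_smul _).prodMk
    ((continuous_fst.sub continuous_snd).const_smul _)).measurable

/-- `rot` as a measurable equivalence. -/
def rotME : F × F ≃ᵐ F × F where
  toEquiv := ⟨rot, rot, rot_invol, rot_invol⟩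
  measurable_toFun := measurable_rot F
  measurable_invFun := measurable_rot F

@[simp] lemma rotME_coe : ⇑(rotME F) = (rot : F × F → F × F) := rfl
@[simp] lemma rotME_symm_coe : ⇑(rotME F).symm = (rot : F × F → F × F) := rfl

lemma rot_measurePreserving [FiniteDimensional ℝ F]
    [(volume : Measure F).IsAddHaarMeasure] :
    MeasurePreserving (rot : F × F → F × F) volume volume := by
  haveI : (volume : Measure (F × F)).IsAddHaarMeasure := by
    rw [Measure.volume_eq_prod]; infer_instance
  refine ⟨measurable_rot F, ?_⟩
  have hc : rotL F ∘ₗ rotL F = LinearMap.id := LinearMap.ext rot_invol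
  have hd2 : LinearMap.det (rotL F) * LinearMap.det (rotL F) = 1 := by
    rw [← LinearMap.det_comp, hc, LinearMap.det_id]
  have habs : |(LinearMap.det (rotL F))⁻¹| = 1 := by
    rcases mul_self_eq_one_iff.mp hd2 with h | h <;> rw [h] <;> norm_num
  have hne : LinearMap.det (rotL F) ≠ 0 := by
    intro h; rw [h] at hd2; norm_num at hd2
  have hmap := Measure.map_linearMap_addHaar_eq_smul_addHaar (volume : Measure (F × F)) hne
  rw [rotL_coe] at hmap
  rw [hmap, habs]
  simp

end RotTop

section DEntAux

lemma dEnt_map_measurePreserving {F : Type*} [MeasureSpace F]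
    [SigmaFinite (volume : Measure F)] (e : F ≃ᵐ F)
    (hvol : MeasurePreserving (⇑e) volume volume) (μ : Measure F) [SigmaFinite μ]
    (hac : μ ≪ volume) : dEnt (μ.map e) = dEnt μ := by
  have key : (fun x => (μ.map e).rnDeriv (volume.map e) (e x)) =ᵐ[volume] μ.rnDeriv volume :=
    e.measurableEmbedding.rnDeriv_map μ volume
  rw [hvol.map_eq] at key
  have key' : (fun x => ((μ.map e).rnDeriv volume (e x))) =ᵐ[μ] μ.rnDeriv volume := hac.ae_eq key
  rw [dEnt, dEnt, MeasureTheory.integral_map_equiv]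
  congr 1
  refine integral_congr_ae (key'.mono fun x hx => ?_)
  simp only at hx ⊢
  rw [hx]

end DEntAux

section MconvAux

lemma mconv_ac {F : Type*} [MeasureSpace F] [AddCommGroup F] [MeasurableAdd₂ F]
    [(volume : Measure F).IsAddLeftInvariant]
    (μ ν : Measure F) [SFinite μ] [SFinite ν] (hν : ν ≪ volume) : mconv μ ν ≪ volume := by
  refine Measure.AbsolutelyContinuous.mk fun s hs h0 => ?_
  rw [mconv, Measure.map_apply measurable_add hs,
    Measure.prod_apply (measurable_add hs)]
  have hz : ∀ x : F, ν (Prod.mk x ⁻¹' ((fun p : F × F => p.1 + p.2) ⁻¹' s)) = 0 := by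
    intro x
    have hxs : (Prod.mk x ⁻¹' ((fun p : F × F => p.1 + p.2) ⁻¹' s)) = (fun y => x + y) ⁻¹' s := rfl
    rw [hxs]
    refine hν ?_
    rw [measure_preimage_add]
    exact h0
  simp [hz]

lemma mconv_map {F G : Type*} [MeasurableSpace F] [MeasurableSpace G] [AddMonoid F] [AddMonoid G]
    [MeasurableAdd₂ F] [MeasurableAdd₂ G]
    (μ ν : Measure F) [SFinite μ] [SFinite ν] {f : F → G} (hf : Measurable f)
    (hadd : ∀ x y, f (x + y) = f x + f y) :
    (mconv μ ν).map f = mconv (μ.map f) (ν.map f) := by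
  rw [mconv, mconv, Measure.map_map hf measurable_add, Measure.map_prod_map _ _ hf hf,
      Measure.map_map measurable_add (hf.prodMap hf)]
  congr 1
  funext p
  exact (hadd p.1 p.2)

instance mconv_prob {F : Type*} [MeasurableSpace F] [AddMonoid F] [MeasurableAdd₂ F]
    (μ ν : Measure F) [IsProbabilityMeasure μ] [IsProbabilityMeasure ν] :
    IsProbabilityMeasure (mconv μ ν) :=
  Measure.isProbabilityMeasure_map measurable_add.aemeasurable

end MconvAux

section PiACAux

lemma pi_absolutelyContinuous {n : ℕ} {α : Fin n → Type*} [∀ i, MeasurableSpace (α i)]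
    (μ ν : ∀ i, Measure (α i)) [∀ i, SigmaFinite (μ i)] [∀ i, SigmaFinite (ν i)]
    (h : ∀ i, μ i ≪ ν i) : Measure.pi μ ≪ Measure.pi ν := by
  induction n with
  | zero =>
    refine Measure.AbsolutelyContinuous.mk fun s hs h0 => ?_
    rcases s.eq_empty_or_nonempty with rfl | ⟨x, hx⟩
    · simp
    · exfalso
      have hsu : s = Set.univ := Set.eq_univ_iff_forall.mpr fun y => (Subsingleton.elim x y ▸ hx)
      rw [hsu, Measure.pi_univ] at h0
      simp at h0
  | succ n ih =>
    have hmp := measurePreserving_piFinSuccAbove μ 0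
    have hmpν := measurePreserving_piFinSuccAbove ν 0
    have h1 : Measure.pi μ =
        ((μ 0).prod (Measure.pi fun i => μ (Fin.succAbove 0 i))).map
          (MeasurableEquiv.piFinSuccAbove α 0).symm :=
      (hmp.symm _).map_eq.symm
    have h2 : Measure.pi ν =
        ((ν 0).prod (Measure.pi fun i => ν (Fin.succAbove 0 i))).map
          (MeasurableEquiv.piFinSuccAbove α 0).symm :=
      (hmpν.symm _).map_eq.symm
    rw [h1, h2]
    exact (MeasurableEquiv.piFinSuccAbove α 0).symm.measurableEmbedding.absolutelyContinuous_map
      ((h 0).prod (ih _ _ fun i => h _))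

instance gaussPi_prob (v : ℝ≥0) (d : ℕ) : IsProbabilityMeasure (gaussPi v d) :=
  Measure.isProbabilityMeasure_map (MeasurableEquiv.toLp 2 (Fin d → ℝ)).measurable.aemeasurable

lemma gaussPi_ac {v : ℝ≥0} (hv : v ≠ 0) (d : ℕ) : gaussPi v d ≪ volume := by
  have h1 : Measure.pi (fun _ : Fin d => gaussianReal 0 v) ≪
      Measure.pi (fun _ : Fin d => (volume : Measure ℝ)) :=
    pi_absolutelyContinuous _ _ fun _ => gaussianReal_absolutelyContinuous 0 hv
  have h2 : (volume : Measure (EuclideanSpace ℝ (Fin d))) =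
      (Measure.pi fun _ : Fin d => (volume : Measure ℝ)).map
        (MeasurableEquiv.toLp 2 (Fin d → ℝ)) := by
    rw [← ((EuclideanSpace.volume_preserving_symm_measurableEquiv_toLp (Fin d)).symm _).map_eq]
    rfl
  rw [gaussPi, h2]
  exact (MeasurableEquiv.toLp 2
    (Fin d → ℝ)).measurableEmbedding.absolutelyContinuous_map h1

end PiACAux

section WDAux

lemma map_withDensity_equiv {α β : Type*} [MeasurableSpace α] [MeasurableSpace β] (e : α ≃ᵐ β)
    (μ : Measure α) {f : α → ℝ≥0∞} (hf : Measurable f) :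
    (μ.withDensity f).map e = (μ.map e).withDensity (fun y => f (e.symm y)) := by
  ext s hs
  rw [Measure.map_apply e.measurable hs, withDensity_apply _ (e.measurable hs),
    withDensity_apply _ hs,
    setLIntegral_map hs (show Measurable fun y => f (e.symm y) from
      hf.comp e.symm.measurable) e.measurable]
  refine setLIntegral_congr_fun (e.measurable hs) (fun x _ => by simp)

lemma withDensity_prod {α β : Type*} [MeasurableSpace α] [MeasurableSpace β]
    (μ : Measure α) (ν : Measure β) [SigmaFinite μ] [SigmaFinite ν]
    {f : α → ℝ≥0∞} {g : β → ℝ≥0∞} (hf : Measurable f) (hg : Measurable g)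
    [SigmaFinite (μ.withDensity f)] [SigmaFinite (ν.withDensity g)] :
    (μ.withDensity f).prod (ν.withDensity g) =
      (μ.prod ν).withDensity (fun p => f p.1 * g p.2) := by
  refine Measure.prod_eq fun s t hs ht => ?_
  rw [withDensity_apply _ (hs.prod ht), ← Measure.prod_restrict,
    lintegral_prod_mul hf.aemeasurable hg.aemeasurable,
    withDensity_apply _ hs, withDensity_apply _ ht]

end WDAux

section ScalarGauss

lemma gaussianPDFReal_pair_eq {v : ℝ≥0} {a b x y : ℝ} (h : a ^ 2 + b ^ 2 = x ^ 2 + y ^ 2) :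
    gaussianPDFReal 0 v a * gaussianPDFReal 0 v b =
      gaussianPDFReal 0 v x * gaussianPDFReal 0 v y := by
  simp only [gaussianPDFReal, sub_zero]
  set c := (Real.sqrt (2 * Real.pi * (v : ℝ)))⁻¹ with hc
  have key : ∀ ea eb : ℝ, c * ea * (c * eb) = c * c * (ea * eb) := fun _ _ => by ring
  rw [key, key, ← Real.exp_add, ← Real.exp_add, ← add_div, ← add_div]
  have hx : -a ^ 2 + -b ^ 2 = -x ^ 2 + -y ^ 2 := by linarith
  rw [hx]

lemma gauss_pair_rot (v : ℝ≥0) :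
    ((gaussianReal 0 v).prod (gaussianReal 0 v)).map (rot : ℝ × ℝ → ℝ × ℝ) =
      (gaussianReal 0 v).prod (gaussianReal 0 v) := by
  rcases eq_or_ne v 0 with rfl | hv
  · rw [gaussianReal_zero_var, Measure.dirac_prod_dirac, Measure.map_dirac' (measurable_rot ℝ)]
    have hz : rot ((0 : ℝ), (0 : ℝ)) = (0, 0) := by simp [rot]
    rw [hz]
  · have hpdf : Measurable (gaussianPDF 0 v) := measurable_gaussianPDF 0 v
    have hrepr : gaussianReal 0 v = volume.withDensity (gaussianPDF 0 v) :=
      gaussianReal_of_var_ne_zero 0 hv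
    haveI : SigmaFinite (volume.withDensity (gaussianPDF 0 v)) := by
      rw [← hrepr]; infer_instance
    have hprod : (gaussianReal 0 v).prod (gaussianReal 0 v) =
        (volume : Measure (ℝ × ℝ)).withDensity
          (fun p => gaussianPDF 0 v p.1 * gaussianPDF 0 v p.2) := by
      rw [hrepr, withDensity_prod _ _ hpdf hpdf, ← Measure.volume_eq_prod]
    have hF : Measurable (fun p : ℝ × ℝ => gaussianPDF 0 v p.1 * gaussianPDF 0 v p.2) :=
      (hpdf.comp measurable_fst).mul (hpdf.comp measurable_snd)
    have hinv : ∀ p : ℝ × ℝ,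
        gaussianPDF 0 v ((rot p).1) * gaussianPDF 0 v ((rot p).2) =
          gaussianPDF 0 v p.1 * gaussianPDF 0 v p.2 := by
      intro p
      have hsq : ((Real.sqrt 2)⁻¹ * (p.1 + p.2)) ^ 2 + ((Real.sqrt 2)⁻¹ * (p.1 - p.2)) ^ 2 =
          p.1 ^ 2 + p.2 ^ 2 := by
        have h2 : ((Real.sqrt 2)⁻¹) ^ 2 = (2 : ℝ)⁻¹ := by rw [sq, sqrt2_inv_mul_self]
        rw [mul_pow, mul_pow, h2]; ring
      simp only [gaussianPDF, rot, smul_eq_mul]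
      rw [← ENNReal.ofReal_mul (gaussianPDFReal_nonneg _ _ _),
        ← ENNReal.ofReal_mul (gaussianPDFReal_nonneg _ _ _)]
      exact congrArg _ (gaussianPDFReal_pair_eq hsq)
    rw [hprod, show (rot : ℝ × ℝ → ℝ × ℝ) = ⇑(rotME ℝ) from rfl,
      map_withDensity_equiv (rotME ℝ) _ hF]
    have hmp : (volume : Measure (ℝ × ℝ)).map (rotME ℝ) = volume :=
      (rot_measurePreserving ℝ).map_eq
    rw [hmp]
    congr 1
    funext p
    have hsymm : (rotME ℝ).symm p = rot p := rfl
    rw [hsymm]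
    exact hinv p

end ScalarGauss

section GaussLikeSec

variable {F G : Type} [MeasurableSpace F] [AddCommGroup F] [Module ℝ F]
  [MeasurableSpace G] [AddCommGroup G] [Module ℝ G]

/-- A measure is Gauss-like if it is the pushforward of a product of centered
one-dimensional Gaussians under a linear map. -/
def GaussLike (μ : Measure F) : Prop :=
  ∃ (ι : Type) (_ : Fintype ι) (v : ι → ℝ≥0) (L : (ι → ℝ) → F),
    Measurable L ∧ (∀ x y, L (x + y) = L x + L y) ∧ (∀ (c : ℝ) (x), L (c • x) = c • L x) ∧
    μ = (Measure.pi fun a => gaussianReal 0 (v a)).map L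

lemma GaussLike.prob {μ : Measure F} (h : GaussLike μ) : IsProbabilityMeasure μ := by
  obtain ⟨ι, hι, v, L, hLm, -, -, rfl⟩ := h
  letI := hι
  exact Measure.isProbabilityMeasure_map hLm.aemeasurable

lemma GaussLike.map {μ : Measure F} (h : GaussLike μ) {f : F → G} (hf : Measurable f)
    (hadd : ∀ x y, f (x + y) = f x + f y) (hsmul : ∀ (c : ℝ) x, f (c • x) = c • f x) :
    GaussLike (μ.map f) := by
  obtain ⟨ι, hι, v, L, hLm, hLa, hLs, rfl⟩ := h
  letI := hι
  refine ⟨ι, hι, v, f ∘ L, hf.comp hLm, ?_, ?_, ?_⟩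
  · intro x y; simp only [Function.comp_apply, hLa, hadd]
  · intro c x; simp only [Function.comp_apply, hLs, hsmul]
  · rw [Measure.map_map hf hLm]

lemma GaussLike.prod {μ : Measure F} {ν : Measure G} (hμ : GaussLike μ) (hν : GaussLike ν) :
    GaussLike (μ.prod ν) := by
  obtain ⟨ι₁, hι₁, v₁, L₁, hL₁m, hL₁a, hL₁s, rfl⟩ := hμ
  obtain ⟨ι₂, hι₂, v₂, L₂, hL₂m, hL₂a, hL₂s, rfl⟩ := hν
  letI := hι₁; letI := hι₂
  refine ⟨ι₁ ⊕ ι₂, inferInstance, Sum.elim v₁ v₂,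
    (Prod.map L₁ L₂) ∘ ⇑(MeasurableEquiv.sumPiEquivProdPi (fun _ : ι₁ ⊕ ι₂ => ℝ)), ?_, ?_, ?_, ?_⟩
  · exact (hL₁m.prodMap hL₂m).comp (MeasurableEquiv.sumPiEquivProdPi _).measurable
  · intro x y
    show (L₁ ((fun i => x (Sum.inl i)) + fun i => y (Sum.inl i)),
        L₂ ((fun i => x (Sum.inr i)) + fun i => y (Sum.inr i))) = _
    rw [hL₁a, hL₂a]
    rfl
  · intro c x
    show (L₁ (c • fun i => x (Sum.inl i)), L₂ (c • fun i => x (Sum.inr i))) = _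
    rw [hL₁s, hL₂s]
    rfl
  · have h := measurePreserving_sumPiEquivProdPi
      (μ := fun i : ι₁ ⊕ ι₂ => gaussianReal 0 (Sum.elim v₁ v₂ i))
    have e1 : (Measure.pi fun a => gaussianReal 0 (v₁ a)) =
        Measure.pi fun i : ι₁ => gaussianReal 0 (Sum.elim v₁ v₂ (Sum.inl i)) := rfl
    have e2 : (Measure.pi fun a => gaussianReal 0 (v₂ a)) =
        Measure.pi fun i : ι₂ => gaussianReal 0 (Sum.elim v₁ v₂ (Sum.inr i)) := rfl
    rw [Measure.map_prod_map _ _ hL₁m hL₂m, e1, e2, ← h.map_eq,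
      Measure.map_map (hL₁m.prodMap hL₂m) (MeasurableEquiv.sumPiEquivProdPi _).measurable]

lemma GaussLike.mconv' [MeasurableAdd₂ F] {μ ν : Measure F} (hμ : GaussLike μ)
    (hν : GaussLike ν) : GaussLike (mconv μ ν) := by
  haveI := hμ.prob; haveI := hν.prob
  exact (hμ.prod hν).map measurable_add
    (fun x y => by simp only [Prod.fst_add, Prod.snd_add]; abel)
    (fun c x => by simp only [Prod.smul_fst, Prod.smul_snd, smul_add])

lemma insertNth_smul {n : ℕ} {α : Fin (n + 1) → Type*} [∀ j, AddCommGroup (α j)]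
    [∀ j, Module ℝ (α j)] (i : Fin (n + 1)) (c : ℝ) (x : α i)
    (p : ∀ j, α (i.succAbove j)) :
    i.insertNth (c • x) (c • p) = c • i.insertNth x p := by
  refine funext fun j => ?_
  refine Fin.succAboveCases i ?_ ?_ j
  · simp
  · intro k; simp

lemma GaussLike.pi {n : ℕ} : ∀ {α : Fin n → Type} [∀ i, MeasurableSpace (α i)]
    [∀ i, AddCommGroup (α i)] [∀ i, Module ℝ (α i)]
    (μ : ∀ i, Measure (α i)) [∀ i, IsProbabilityMeasure (μ i)],
    (∀ i, GaussLike (μ i)) → GaussLike (Measure.pi μ) := by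
  induction n with
  | zero =>
    intro α _ _ _ μ _ h
    refine ⟨Fin 0, inferInstance, fun _ => 0, fun _ => 0, measurable_const,
      by intro x y; simp, by intro c x; simp, ?_⟩
    haveI h2 : IsProbabilityMeasure
        ((Measure.pi fun a : Fin 0 => gaussianReal 0 0).map
          (fun _ : Fin 0 → ℝ => (0 : ∀ i, α i))) :=
      Measure.isProbabilityMeasure_map measurable_const.aemeasurable
    ext s hs
    rcases s.eq_empty_or_nonempty with rfl | ⟨x, hx⟩
    · simp
    · have hsu : s = Set.univ := Set.eq_univ_iff_forall.mpr fun y => (Subsingleton.elim x y ▸ hx)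
      rw [hsu, measure_univ, measure_univ]
  | succ n ih =>
    intro α _ _ _ μ _ h
    haveI : ∀ i : Fin n, IsProbabilityMeasure ((fun i : Fin n => μ (Fin.succAbove 0 i)) i) :=
      fun i => inferInstance
    have hmp := measurePreserving_piFinSuccAbove μ 0
    have h1 : Measure.pi μ =
        ((μ 0).prod (Measure.pi fun i => μ (Fin.succAbove 0 i))).map
          (MeasurableEquiv.piFinSuccAbove α 0).symm :=
      (hmp.symm _).map_eq.symm
    rw [h1]
    refine ((h 0).prod (ih (fun i : Fin n => μ (Fin.succAbove 0 i)) (fun i => h _))).map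
      (MeasurableEquiv.piFinSuccAbove α 0).symm.measurable ?_ ?_
    · intro x y
      show Fin.insertNth 0 (x.1 + y.1) (x.2 + y.2) = _
      rw [Fin.insertNth_add]
      rfl
    · intro c x
      show Fin.insertNth 0 (c • x.1) (c • x.2) = _
      rw [insertNth_smul]
      rfl

lemma gl_gaussPi (v : ℝ≥0) (d : ℕ) : GaussLike (gaussPi v d) :=
  ⟨Fin d, inferInstance, fun _ => v, ⇑(MeasurableEquiv.toLp 2 (Fin d → ℝ)),
    (MeasurableEquiv.toLp 2 (Fin d → ℝ)).measurable, fun _ _ => rfl, fun _ _ => rfl, rfl⟩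

lemma GaussLike.rot_prod_self {F : Type} [MeasurableSpace F] [AddCommGroup F] [Module ℝ F]
    [MeasurableAdd₂ F] [MeasurableSub₂ F] [MeasurableSMul ℝ F]
    {G : Measure F} (h : GaussLike G) :
    (G.prod G).map (rot : F × F → F × F) = G.prod G := by
  have hrotF : Measurable (rot : F × F → F × F) := measurable_rot'
  obtain ⟨ι, hι, v, L, hLm, hLa, hLs, rfl⟩ := h
  letI := hι
  have hLsub : ∀ x y, L (x - y) = L x - L y := by
    intro x y
    have h1 : x - y = x + (-1 : ℝ) • y := by rw [neg_one_smul, ← sub_eq_add_neg]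
    rw [h1, hLa, hLs, neg_one_smul, ← sub_eq_add_neg]
  have hrotR : Measurable (rot : ℝ × ℝ → ℝ × ℝ) := measurable_rot'
  have hrotP : Measurable (rot : (ι → ℝ) × (ι → ℝ) → (ι → ℝ) × (ι → ℝ)) := measurable_rot'
  set π : Measure (ι → ℝ) := Measure.pi fun a => gaussianReal 0 (v a) with hπ
  have hcw : MeasurePreserving (fun (g : ι → ℝ × ℝ) a => rot (g a))
      (Measure.pi fun a => (gaussianReal 0 (v a)).prod (gaussianReal 0 (v a)))
      (Measure.pi fun a => (gaussianReal 0 (v a)).prod (gaussianReal 0 (v a))) :=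
    measurePreserving_pi _ _ fun a => ⟨hrotR, gauss_pair_rot (v a)⟩
  have harrow := measurePreserving_arrowProdEquivProdArrow ℝ ℝ ι
      (fun a => gaussianReal 0 (v a)) (fun a => gaussianReal 0 (v a))
  have hdiag : (rot : (ι → ℝ) × (ι → ℝ) → _) ∘ ⇑(MeasurableEquiv.arrowProdEquivProdArrow ℝ ℝ ι)
      = ⇑(MeasurableEquiv.arrowProdEquivProdArrow ℝ ℝ ι) ∘
        (fun (g : ι → ℝ × ℝ) a => rot (g a)) := rfl
  have hpp : (π.prod π).map (rot : (ι → ℝ) × (ι → ℝ) → _) = π.prod π := by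
    rw [← harrow.map_eq, Measure.map_map hrotP harrow.measurable, hdiag,
      ← Measure.map_map (MeasurableEquiv.arrowProdEquivProdArrow ℝ ℝ ι).measurable
        hcw.measurable, hcw.map_eq]
  have hcomm : (rot : F × F → F × F) ∘ Prod.map L L
      = Prod.map L L ∘ (rot : (ι → ℝ) × (ι → ℝ) → _) := by
    funext p
    show ((Real.sqrt 2)⁻¹ • (L p.1 + L p.2), (Real.sqrt 2)⁻¹ • (L p.1 - L p.2))
      = (L ((Real.sqrt 2)⁻¹ • (p.1 + p.2)), L ((Real.sqrt 2)⁻¹ • (p.1 - p.2)))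
    rw [hLs, hLs, hLa, hLsub]
  rw [Measure.map_prod_map _ _ hLm hLm, Measure.map_map hrotF (hLm.prodMap hLm), hcomm,
    ← Measure.map_map (hLm.prodMap hLm) hrotP, hpp]

end GaussLikeSec

section Assembly

instance gaussE_prob (D : Datum) (δ : ℝ) : IsProbabilityMeasure (gaussE D δ) := by
  unfold gaussE; infer_instance

lemma gl_gaussE (D : Datum) (δ : ℝ) : GaussLike (gaussE D δ) :=
  GaussLike.pi _ (fun i => gl_gaussPi δ.toNNReal (D.r i))

lemma dEnt_mconv_rot {d : ℕ}
    (μ κ : Measure (EuclideanSpace ℝ (Fin d) × EuclideanSpace ℝ (Fin d)))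
    [IsProbabilityMeasure μ] [IsProbabilityMeasure κ]
    (hκrot : κ.map rot = κ) (hκac : κ ≪ volume) :
    dEnt (mconv (μ.map rot) κ) = dEnt (mconv μ κ) := by
  set F := EuclideanSpace ℝ (Fin d) with hF
  haveI : (volume : Measure (F × F)).IsAddHaarMeasure := by
    rw [Measure.volume_eq_prod]; exact Measure.prod.instIsAddHaarMeasure _ _
  haveI : SigmaFinite (volume : Measure (F × F)) := by
    rw [Measure.volume_eq_prod]; infer_instance
  have h1 : mconv (μ.map rot) κ = (mconv μ κ).map rot := by
    rw [mconv_map μ κ measurable_rot' rot_add, hκrot]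
  rw [h1]
  have hac : mconv μ κ ≪ volume := mconv_ac μ κ hκac
  exact dEnt_map_measurePreserving (rotME F)
    (by rw [rotME_coe]; exact rot_measurePreserving F) _ hac

/-- The rotation on the two-copy ambient space. -/
def rotE2 (D : Datum) : D.E2 → D.E2 := fun x i => rot (x i)

lemma measurable_rotE2 (D : Datum) : Measurable (rotE2 D) :=
  measurable_pi_lambda _ fun i => measurable_rot'.comp (measurable_pi_apply i)

lemma sFun2_rotE2 (D : Datum) {ε δ : ℝ} (hε : 0 < ε) (hδ : 0 < δ)
    (ν : Measure D.E2) [IsProbabilityMeasure ν] :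
    sFun2 D ε δ (ν.map (rotE2 D)) = sFun2 D ε δ ν := by
  have hd' : δ.toNNReal ≠ 0 := ne_of_gt (Real.toNNReal_pos.mpr hδ)
  have he' : ε.toNNReal ≠ 0 := ne_of_gt (Real.toNNReal_pos.mpr hε)
  rw [sFun2, sFun2]
  congr 1
  · refine Finset.sum_congr rfl fun i _ => ?_
    congr 1
    have hev : Measurable fun x : D.E2 => x i := measurable_pi_apply i
    have hmap : (ν.map (rotE2 D)).map (fun x => x i) = (ν.map (fun x => x i)).map rot := by
      rw [Measure.map_map hev (measurable_rotE2 D), Measure.map_map measurable_rot' hev]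
      rfl
    rw [hmap]
    haveI : IsProbabilityMeasure (ν.map (fun x : D.E2 => x i)) :=
      Measure.isProbabilityMeasure_map hev.aemeasurable
    have hrot : ((gaussPi δ.toNNReal (D.r i)).prod (gaussPi δ.toNNReal (D.r i))).map rot
        = (gaussPi δ.toNNReal (D.r i)).prod (gaussPi δ.toNNReal (D.r i)) :=
      (gl_gaussPi _ _).rot_prod_self
    have hacG : (gaussPi δ.toNNReal (D.r i)).prod (gaussPi δ.toNNReal (D.r i)) ≪ volume := by
      rw [Measure.volume_eq_prod]
      exact (gaussPi_ac hd' _).prod (gaussPi_ac hd' _)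
    exact dEnt_mconv_rot _ _ hrot hacG
  · refine Finset.sum_congr rfl fun j _ => ?_
    congr 1
    have hAj : Measurable ⇑(D.A j) := (LinearMap.continuous_of_finiteDimensional _).measurable
    have hp1 : Measurable fun x : D.E2 => (fun i => (x i).1 : D.E) :=
      measurable_pi_lambda _ fun i => measurable_fst.comp (measurable_pi_apply i)
    have hp2 : Measurable fun x : D.E2 => (fun i => (x i).2 : D.E) :=
      measurable_pi_lambda _ fun i => measurable_snd.comp (measurable_pi_apply i)
    have hpair : Measurable fun x : D.E2 =>
        (D.A j (fun i => (x i).1), D.A j (fun i => (x i).2)) :=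
      (hAj.comp hp1).prodMk (hAj.comp hp2)
    have hmap : (ν.map (rotE2 D)).map
          (fun x => (D.A j (fun i => (x i).1), D.A j (fun i => (x i).2)))
        = (ν.map (fun x => (D.A j (fun i => (x i).1), D.A j (fun i => (x i).2)))).map rot := by
      rw [Measure.map_map hpair (measurable_rotE2 D), Measure.map_map measurable_rot' hpair]
      congr 1
      funext x
      show (D.A j (fun i => (rot (x i)).1), D.A j (fun i => (rot (x i)).2)) = _
      have e1 : (fun i => (rot (x i)).1)
          = (Real.sqrt 2)⁻¹ • ((fun i => (x i).1) + (fun i => (x i).2)) := rfl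
      have e2 : (fun i => (rot (x i)).2)
          = (Real.sqrt 2)⁻¹ • ((fun i => (x i).1) - (fun i => (x i).2)) := rfl
      rw [e1, e2, _root_.map_smul, _root_.map_smul, _root_.map_add, _root_.map_sub]
      rfl
    rw [hmap]
    haveI : IsProbabilityMeasure ((gaussE D δ).map (D.A j)) :=
      Measure.isProbabilityMeasure_map hAj.aemeasurable
    haveI : IsProbabilityMeasure
        (ν.map (fun x => (D.A j (fun i => (x i).1), D.A j (fun i => (x i).2)))) :=
      Measure.isProbabilityMeasure_map hpair.aemeasurable
    haveI : IsProbabilityMeasure (noise2 D ε δ j) := by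
      unfold noise2; infer_instance
    have hgl : GaussLike (mconv ((gaussE D δ).map (D.A j)) (gaussPi ε.toNNReal (D.nt j))) :=
      GaussLike.mconv' ((gl_gaussE D δ).map hAj (fun x y => (D.A j).map_add x y) (fun c x => (D.A j).map_smul c x)) (gl_gaussPi _ _)
    have hrot : (noise2 D ε δ j).map rot = noise2 D ε δ j := hgl.rot_prod_self
    have hac1 : mconv ((gaussE D δ).map (D.A j)) (gaussPi ε.toNNReal (D.nt j)) ≪ volume :=
      mconv_ac _ _ (gaussPi_ac he' _)
    have hnac : noise2 D ε δ j ≪ volume := by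
      rw [noise2, Measure.volume_eq_prod]
      exact hac1.prod hac1
    exact dEnt_mconv_rot _ _ hrot hnac

end Assembly
end RotationAux

/-- **Rotation invariance** (Lemma 4.5): for `(X₁, X₂) ∈ P(2r)` and finite-valued `U`,
with `X_± := (X₁ ± X₂)/√2`, one has `s_{ε,δ}(X₁, X₂ ∣ U) = s_{ε,δ}(X₊, X₋ ∣ U)`. -/
theorem rotation_invariance (D : Datum) (hD : D.Valid) (ε δ : ℝ) (hε : 0 < ε) (hδ : 0 < δ)
    {Ω ι : Type} [MeasurableSpace Ω] [Fintype ι] [MeasurableSpace ι]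
    [MeasurableSingletonClass ι] (P : Measure Ω) [IsProbabilityMeasure P]
    (X : Ω → D.E2) (hX : Measurable X) (U : Ω → ι) (hU : Measurable U)
    (hmem : MemP2 D (P.map X)) :
    sCond2 D ε δ P X U =
      sCond2 D ε δ P (fun ω i =>
        ((Real.sqrt 2)⁻¹ • ((X ω i).1 + (X ω i).2),
          (Real.sqrt 2)⁻¹ • ((X ω i).1 - (X ω i).2))) U := by
  rw [sCond2, sCond2]
  refine Finset.sum_congr rfl fun u _ => ?_
  by_cases hP0 : P (U ⁻¹' {u}) = 0
  · rw [hP0]; simp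
  · haveI : IsProbabilityMeasure (P[|U ⁻¹' {u}]) :=
      ProbabilityTheory.cond_isProbabilityMeasure hP0
    haveI : IsProbabilityMeasure ((P[|U ⁻¹' {u}]).map X) :=
      Measure.isProbabilityMeasure_map hX.aemeasurable
    congr 1
    have hXT : (P[|U ⁻¹' {u}]).map (fun ω => rotE2 D (X ω))
        = ((P[|U ⁻¹' {u}]).map X).map (rotE2 D) :=
      (Measure.map_map (measurable_rotE2 D) hX).symm
    calc sFun2 D ε δ ((P[|U ⁻¹' {u}]).map X)
        = sFun2 D ε δ (((P[|U ⁻¹' {u}]).map X).map (rotE2 D)) :=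
          (sFun2_rotE2 D hε hδ _).symm
      _ = _ := by rw [← hXT]; rfl


end BLEPI
end
end

section
/- (Preservation of finiteness conditions under critical splitting) Let (A, c, r, d) be a BL-EPI datum satisfying: (i) Σ_i d_i dim(V_i) ≤ Σ_j c_j dim(A_j V) for every r-product form subspace V, and (ii) Σ_i d_i r_i = Σ_j c_j n_j. Let U = U_1 × ⋯ × U_k be an r-product form critical subspace, i.e. Σ_i d_i dim(U_i) = Σ_j c_j dim(A_j U). Then the induced BL-EPI data (Ã, c, r̃, d) on U (with Ã_j the restriction of A_j mapping onto A_j U) and (Ã̃, c, r̃^c, d) on U^⊥ (with Ã̃_j x = Π_{(A_j U)^⊥} A_j x) also satisfy the corresponding conditions (i) and (ii). -/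
open MeasureTheory ProbabilityTheory Module
open scoped ENNReal NNReal

noncomputable section

namespace BLEPI

lemma finrank_map_inj {M N : Type*} [AddCommGroup M] [Module ℝ M]
    [AddCommGroup N] [Module ℝ N] (f : M →ₗ[ℝ] N) (hf : Function.Injective f)
    (p : Submodule ℝ M) : finrank ℝ (p.map f) = finrank ℝ p :=
  ((Submodule.equivMapOfInjective f hf p).finrank_eq).symm

lemma map_pi_pi {k : ℕ} {M N : Fin k → Type*}
    [∀ i, AddCommGroup (M i)] [∀ i, Module ℝ (M i)]
    [∀ i, AddCommGroup (N i)] [∀ i, Module ℝ (N i)]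
    (f : ∀ i, M i →ₗ[ℝ] N i) (V : ∀ i, Submodule ℝ (M i)) :
    (Submodule.pi Set.univ V).map
        (LinearMap.pi (fun i => (f i) ∘ₗ LinearMap.proj i)) =
      Submodule.pi Set.univ (fun i => (V i).map (f i)) := by
  ext x
  simp only [Submodule.mem_map, Submodule.mem_pi, Set.mem_univ, forall_true_left]
  constructor
  · rintro ⟨v, hv, rfl⟩ i
    exact ⟨v i, hv i, rfl⟩
  · intro h
    choose v hv hfv using h
    exact ⟨v, hv, funext fun i => hfv i⟩

lemma pi_sup' {k : ℕ} {M : Fin k → Type*}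
    [∀ i, AddCommGroup (M i)] [∀ i, Module ℝ (M i)]
    (U W : ∀ i, Submodule ℝ (M i)) :
    Submodule.pi Set.univ (fun i => U i ⊔ W i) =
      Submodule.pi Set.univ U ⊔ Submodule.pi Set.univ W := by
  apply le_antisymm
  · intro x hx
    have h : ∀ i, ∃ u ∈ U i, ∃ w ∈ W i, u + w = x i := by
      intro i
      exact Submodule.mem_sup.mp (hx i trivial)
    choose u hu w hw huw using h
    exact Submodule.mem_sup.mpr ⟨u, fun i _ => hu i, w, fun i _ => hw i,
      funext fun i => huw i⟩
  · exact sup_le (Submodule.pi_mono fun i _ => le_sup_left)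
      (Submodule.pi_mono fun i _ => le_sup_right)

lemma finrank_map_codRestrict_comp {M N E' : Type*} [AddCommGroup M] [Module ℝ M]
    [AddCommGroup N] [Module ℝ N] [AddCommGroup E'] [Module ℝ E']
    (p : Submodule ℝ N) (f : M →ₗ[ℝ] N) (h : ∀ x, f x ∈ p)
    (e : ↥p ≃ₗ[ℝ] E') (q : Submodule ℝ M) :
    finrank ℝ (q.map (e.toLinearMap ∘ₗ LinearMap.codRestrict p f h)) =
      finrank ℝ (q.map f) :=
  calc finrank ℝ (q.map (e.toLinearMap ∘ₗ LinearMap.codRestrict p f h))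
      = finrank ℝ ((q.map (LinearMap.codRestrict p f h)).map e.toLinearMap) := by
        rw [Submodule.map_comp]
    _ = finrank ℝ (q.map (LinearMap.codRestrict p f h)) :=
        finrank_map_inj _ e.injective _
    _ = finrank ℝ ((q.map (LinearMap.codRestrict p f h)).map p.subtype) :=
        (finrank_map_inj _ (Submodule.injective_subtype p) _).symm
    _ = finrank ℝ (q.map f) := by
        rw [← Submodule.map_comp, LinearMap.subtype_comp_codRestrict]

set_option maxHeartbeats 1000000 in
/-- **Preservation of the finiteness conditions under critical splitting** (Lemma 5.4):
if the BL-EPI datum satisfies conditions (i) and (ii) and `U` is an `r`-product form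
critical subspace, then both induced BL-EPI data (on `U` and on `U^⊥`) also satisfy the
corresponding conditions (i) and (ii). -/
theorem critical_splitting_preserves_conditions (D : Datum) (hD : D.Valid)
    (hc1 : Cond1 D) (hc2 : Cond2 D)
    (U : ∀ i, Submodule ℝ (EuclideanSpace ℝ (Fin (D.r i))))
    (hcrit : ∑ i, D.d i * (finrank ℝ (U i) : ℝ) = ∑ j, D.c j * (finrank ℝ (AjU D U j) : ℝ))
    (φ : ∀ i, EuclideanSpace ℝ (Fin (finrank ℝ (U i))) ≃ₗᵢ[ℝ] U i)
    (ψ : ∀ j, EuclideanSpace ℝ (Fin (finrank ℝ (AjU D U j))) ≃ₗᵢ[ℝ] AjU D U j)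
    (φ' : ∀ i, EuclideanSpace ℝ (Fin (finrank ℝ ((U i)ᗮ))) ≃ₗᵢ[ℝ] (U i)ᗮ)
    (ψ' : ∀ j, EuclideanSpace ℝ (Fin (finrank ℝ ((AjU D U j)ᗮ))) ≃ₗᵢ[ℝ] (AjU D U j)ᗮ) :
    (Cond1 (inducedU D U φ ψ) ∧ Cond2 (inducedU D U φ ψ)) ∧
    (Cond1 (inducedUperp D U φ' ψ') ∧ Cond2 (inducedUperp D U φ' ψ')) := by
  classical
  have hfinU : ∀ i, finrank ℝ (U i) + finrank ℝ ((U i)ᗮ) = D.r i := by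
    intro i
    simpa [finrank_euclideanSpace_fin] using (U i).finrank_add_finrank_orthogonal
  have hfinA : ∀ j, finrank ℝ (AjU D U j) + finrank ℝ ((AjU D U j)ᗮ) = D.nt j := by
    intro j
    simpa [finrank_euclideanSpace_fin] using (AjU D U j).finrank_add_finrank_orthogonal
  refine ⟨⟨?_, hcrit⟩, ?_, ?_⟩
  · -- Cond1 for inducedU
    intro V
    set W : ∀ i, Submodule ℝ (EuclideanSpace ℝ (Fin (D.r i))) :=
      fun i => (V i).map ((U i).subtype ∘ₗ
        ((φ i).toLinearEquiv : _ ≃ₗ[ℝ] _).toLinearMap) with hWdef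
    have hinj : ∀ i, Function.Injective ((U i).subtype ∘ₗ
        ((φ i).toLinearEquiv : _ ≃ₗ[ℝ] _).toLinearMap) := by
      intro i
      rw [LinearMap.coe_comp]
      exact (Submodule.injective_subtype _).comp (φ i).toLinearEquiv.injective
    have hWrank : ∀ i, finrank ℝ (W i) = finrank ℝ (V i) :=
      fun i => finrank_map_inj _ (hinj i) _
    have hpiW : (Submodule.pi Set.univ V).map (embedMap D U φ) =
        Submodule.pi Set.univ W :=
      map_pi_pi (fun i => (U i).subtype ∘ₗ
        ((φ i).toLinearEquiv : _ ≃ₗ[ℝ] _).toLinearMap) V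
    have hmap : ∀ j, finrank ℝ ((Submodule.pi Set.univ V).map ((inducedU D U φ ψ).A j)) =
        finrank ℝ ((Submodule.pi Set.univ W).map (D.A j)) := by
      intro j
      have h0 := finrank_map_codRestrict_comp (AjU D U j) (D.A j ∘ₗ embedMap D U φ)
        (fun v => Submodule.mem_map_of_mem (embedMap_mem D U φ v))
        (((ψ j).symm.toLinearEquiv : _ ≃ₗ[ℝ] _)) (Submodule.pi Set.univ V)
      refine h0.trans ?_
      rw [Submodule.map_comp]
      exact congrArg (fun S => finrank ℝ (S.map (D.A j))) hpiW
    show ∑ i, D.d i * (finrank ℝ (V i) : ℝ) ≤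
      ∑ j, D.c j * (finrank ℝ ((Submodule.pi Set.univ V).map ((inducedU D U φ ψ).A j)) : ℝ)
    calc ∑ i, D.d i * (finrank ℝ (V i) : ℝ)
        = ∑ i, D.d i * (finrank ℝ (W i) : ℝ) := by
          refine Finset.sum_congr rfl fun i _ => ?_
          rw [hWrank i]
      _ ≤ ∑ j, D.c j * (finrank ℝ ((Submodule.pi Set.univ W).map (D.A j)) : ℝ) := hc1 W
      _ = ∑ j, D.c j *
          (finrank ℝ ((Submodule.pi Set.univ V).map ((inducedU D U φ ψ).A j)) : ℝ) := by
          refine Finset.sum_congr rfl fun j _ => ?_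
          rw [hmap j]
  · -- Cond1 for inducedUperp
    intro V
    set W : ∀ i, Submodule ℝ (EuclideanSpace ℝ (Fin (D.r i))) :=
      fun i => (V i).map (((U i)ᗮ).subtype ∘ₗ
        ((φ' i).toLinearEquiv : _ ≃ₗ[ℝ] _).toLinearMap) with hWdef
    have hinj : ∀ i, Function.Injective (((U i)ᗮ).subtype ∘ₗ
        ((φ' i).toLinearEquiv : _ ≃ₗ[ℝ] _).toLinearMap) := by
      intro i
      rw [LinearMap.coe_comp]
      exact (Submodule.injective_subtype _).comp (φ' i).toLinearEquiv.injective
    have hWrank : ∀ i, finrank ℝ (W i) = finrank ℝ (V i) :=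
      fun i => finrank_map_inj _ (hinj i) _
    have hWle : ∀ i, W i ≤ (U i)ᗮ := by
      intro i
      show (V i).map (((U i)ᗮ).subtype ∘ₗ
        ((φ' i).toLinearEquiv : _ ≃ₗ[ℝ] _).toLinearMap) ≤ (U i)ᗮ
      refine (Submodule.map_comp _ _ _).trans_le ?_
      exact Submodule.map_subtype_le _ _
    have hpiW : (Submodule.pi Set.univ V).map (embedMapPerp D U φ') =
        Submodule.pi Set.univ W :=
      map_pi_pi (fun i => ((U i)ᗮ).subtype ∘ₗ
        ((φ' i).toLinearEquiv : _ ≃ₗ[ℝ] _).toLinearMap) V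
    have hdisj : ∀ i, U i ⊓ W i = ⊥ := fun i =>
      disjoint_iff.mp (((U i).orthogonal_disjoint).mono_right (hWle i))
    have hVbig : ∀ i, finrank ℝ ↥(U i ⊔ W i) = finrank ℝ (U i) + finrank ℝ (W i) := by
      intro i
      have h := Submodule.finrank_sup_add_finrank_inf_eq (U i) (W i)
      rw [hdisj i] at h
      simp only [finrank_bot] at h
      omega
    have key : ∀ j, (finrank ℝ ((Submodule.pi Set.univ (fun i => U i ⊔ W i)).map (D.A j)) : ℝ) =
        (finrank ℝ (AjU D U j) : ℝ) +
        (finrank ℝ ((Submodule.pi Set.univ V).map ((inducedUperp D U φ' ψ').A j)) : ℝ) := by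
      intro j
      set P : Submodule ℝ (EuclideanSpace ℝ (Fin (D.nt j))) := AjU D U j with hP
      set Q : Submodule ℝ (EuclideanSpace ℝ (Fin (D.nt j))) :=
        (Submodule.pi Set.univ W).map (D.A j) with hQ
      set Qp : Submodule ℝ ↥(Pᗮ) :=
        Q.map ((Submodule.orthogonalProjectionOnto (Pᗮ)).toLinearMap) with hQp
      set Qp' : Submodule ℝ (EuclideanSpace ℝ (Fin (D.nt j))) :=
        Qp.map (Pᗮ).subtype with hQp'
      have hQp'le : Qp' ≤ Pᗮ := Submodule.map_subtype_le _ _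
      have key1 : P ⊔ Q = P ⊔ Qp' := by
        apply le_antisymm
        · refine sup_le le_sup_left ?_
          intro q hq
          have hdec := Submodule.starProjection_add_starProjection_orthogonal (K := P) q
          refine Submodule.mem_sup.mpr ⟨_, (Submodule.orthogonalProjectionOnto P q).2, _, ?_, hdec⟩
          exact Submodule.mem_map_of_mem (Submodule.mem_map_of_mem hq)
        · refine sup_le le_sup_left ?_
          rintro x ⟨y, ⟨q, hq, rfl⟩, rfl⟩
          have hdec := Submodule.starProjection_add_starProjection_orthogonal (K := P) q
          have hx : ((Pᗮ).subtype ((Submodule.orthogonalProjectionOnto (Pᗮ)).toLinearMap q)) =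
              q - ↑(Submodule.orthogonalProjectionOnto P q) := by
            simp only [Submodule.coe_subtype, ContinuousLinearMap.coe_coe]
            exact eq_sub_of_add_eq' hdec
          rw [hx]
          exact Submodule.sub_mem _ (Submodule.mem_sup_right hq)
            (Submodule.mem_sup_left (Submodule.orthogonalProjectionOnto P q).2)
      have key2 : finrank ℝ ↥(P ⊔ Qp') = finrank ℝ P + finrank ℝ Qp' := by
        have h := Submodule.finrank_sup_add_finrank_inf_eq P Qp'
        have hd : P ⊓ Qp' = ⊥ :=
          disjoint_iff.mp ((P.orthogonal_disjoint).mono_right hQp'le)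
        rw [hd] at h
        simp only [finrank_bot] at h
        omega
      have key3 : finrank ℝ ((Submodule.pi Set.univ V).map ((inducedUperp D U φ' ψ').A j)) =
          finrank ℝ Qp' := by
        have e3 : (Submodule.pi Set.univ V).map ((inducedUperp D U φ' ψ').A j) =
            Qp.map (((ψ' j).symm.toLinearEquiv : _ ≃ₗ[ℝ] _).toLinearMap) := by
          show (Submodule.pi Set.univ V).map
              ((((ψ' j).symm.toLinearEquiv : _ ≃ₗ[ℝ] _).toLinearMap) ∘ₗ
                ((Submodule.orthogonalProjectionOnto ((AjU D U j)ᗮ)).toLinearMap ∘ₗ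
                  (D.A j ∘ₗ embedMapPerp D U φ'))) = _
          exact (Submodule.map_comp _ _ _).trans (congrArg (Submodule.map _)
            ((Submodule.map_comp _ _ _).trans (congrArg (Submodule.map _)
              ((Submodule.map_comp _ _ _).trans (congrArg (Submodule.map (D.A j)) hpiW)))))
        rw [e3]
        refine (finrank_map_inj _ (ψ' j).symm.toLinearEquiv.injective Qp).trans ?_
        exact (finrank_map_inj ((Pᗮ).subtype) (Submodule.injective_subtype _) Qp).symm
      have e4 : (Submodule.pi Set.univ (fun i => U i ⊔ W i)).map (D.A j) = P ⊔ Qp' := by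
        rw [pi_sup', Submodule.map_sup]
        exact key1
      rw [e4, key2, key3]
      push_cast
      ring
    have h1 : ∑ i, D.d i * (finrank ℝ ↥(U i ⊔ W i) : ℝ) ≤
        ∑ j, D.c j *
          (finrank ℝ ((Submodule.pi Set.univ (fun i => U i ⊔ W i)).map (D.A j)) : ℝ) :=
      hc1 (fun i => U i ⊔ W i)
    have hL : ∑ i, D.d i * (finrank ℝ ↥(U i ⊔ W i) : ℝ) =
        ∑ i, D.d i * (finrank ℝ (U i) : ℝ) + ∑ i, D.d i * (finrank ℝ (V i) : ℝ) := by
      rw [← Finset.sum_add_distrib]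
      refine Finset.sum_congr rfl fun i _ => ?_
      rw [hVbig i, ← hWrank i]
      push_cast
      ring
    have hR : ∑ j, D.c j *
        (finrank ℝ ((Submodule.pi Set.univ (fun i => U i ⊔ W i)).map (D.A j)) : ℝ) =
        ∑ j, D.c j * (finrank ℝ (AjU D U j) : ℝ) + ∑ j, D.c j *
          (finrank ℝ ((Submodule.pi Set.univ V).map ((inducedUperp D U φ' ψ').A j)) : ℝ) := by
      rw [← Finset.sum_add_distrib]
      refine Finset.sum_congr rfl fun j _ => ?_
      rw [key j]
      ring
    show ∑ i, D.d i * (finrank ℝ (V i) : ℝ) ≤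
      ∑ j, D.c j *
        (finrank ℝ ((Submodule.pi Set.univ V).map ((inducedUperp D U φ' ψ').A j)) : ℝ)
    rw [hL, hR] at h1
    linarith [h1, hcrit]
  · -- Cond2 for inducedUperp
    show ∑ i, D.d i * (finrank ℝ ((U i)ᗮ) : ℝ) = ∑ j, D.c j * (finrank ℝ ((AjU D U j)ᗮ) : ℝ)
    have hL : ∑ i, D.d i * (finrank ℝ ((U i)ᗮ) : ℝ) =
        ∑ i, D.d i * (D.r i : ℝ) - ∑ i, D.d i * (finrank ℝ (U i) : ℝ) := by
      rw [← Finset.sum_sub_distrib]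
      refine Finset.sum_congr rfl fun i _ => ?_
      have h := congrArg (Nat.cast : ℕ → ℝ) (hfinU i)
      push_cast at h
      have h2 : (finrank ℝ ((U i)ᗮ) : ℝ) = (D.r i : ℝ) - (finrank ℝ (U i) : ℝ) := by linarith
      rw [h2]
      ring
    have hR : ∑ j, D.c j * (finrank ℝ ((AjU D U j)ᗮ) : ℝ) =
        ∑ j, D.c j * (D.nt j : ℝ) - ∑ j, D.c j * (finrank ℝ (AjU D U j) : ℝ) := by
      rw [← Finset.sum_sub_distrib]
      refine Finset.sum_congr rfl fun j _ => ?_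
      have h := congrArg (Nat.cast : ℕ → ℝ) (hfinA j)
      push_cast at h
      have h2 : (finrank ℝ ((AjU D U j)ᗮ) : ℝ) =
          (D.nt j : ℝ) - (finrank ℝ (AjU D U j) : ℝ) := by linarith
      rw [h2]
      ring
    rw [hL, hR, hc2, hcrit]


end BLEPI
end
end
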